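/- Let 𝒬P be a quantified logic program over a set of atoms 𝒜. Then 𝒬P is satisfiable if and only if the ASP(Q) program aspq(𝒬P) is coherent. -/

import Mathlib

namespace ASP

universe u v

variable {α : Type u} {β : Type v}

/-- A literal over atoms `α`: an atom or its default negation. -/
inductive Lit (α : Type u) where
  | pos (a : α)
  | neg (a : α)

/-- Satisfaction of a literal by a set of atoms. -/
def Lit.sat (X : Set α) : Lit α → Prop
  | .pos a => a ∈ X
  | .neg a => a ∉ X

/-- The atom occurring in a literal. -/
def Lit.atomOf : Lit α → α
  | .pos a => a
  | .neg a => a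

/-- The head of a rule: an atom (normal rule), a choice `{p}`, or `⊥` (constraint). -/
inductive Head (α : Type u) where
  | atom (a : α)
  | choice (a : α)
  | bot

def Head.atoms : Head α → Set α
  | .atom a => {a}
  | .choice a => {a}
  | .bot => ∅

/-- A rule `H ← B` with head `H` and body `B`, a set of literals. -/
structure Rule (α : Type u) where
  head : Head α
  body : Set (Lit α)

/-- A logic program is a set of rules. -/
abbrev Program (α : Type u) := Set (Rule α)

def ruleAtoms (r : Rule α) : Set α := r.head.atoms ∪ Lit.atomOf '' r.body

def progAtoms (P : Program α) : Set α := ⋃ r ∈ P, ruleAtoms r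

/-- `M` satisfies the `X`-reduct of a literal, i.e. the literal where any literal
not satisfied by `X` has been replaced by `⊥`. -/
def Lit.redSat (X M : Set α) (l : Lit α) : Prop := l.sat X ∧ l.sat M

/-- `M` satisfies the `X`-reduct of a head (`{p}` is read as `p ∨ ¬ p`). -/
def Head.redSat (X M : Set α) : Head α → Prop
  | .atom a => a ∈ X ∧ a ∈ M
  | .choice a => (a ∈ X ∧ a ∈ M) ∨ (a ∉ X ∧ a ∉ M)
  | .bot => False

/-- `M` is a model of the formula obtained from `P` by replacing every literal
not satisfied by `X` with `⊥`. -/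
def redModel (P : Program α) (X M : Set α) : Prop :=
  ∀ r ∈ P, (∀ l ∈ r.body, l.redSat X M) → r.head.redSat X M

/-- `X` is a stable model of `P`: a subset-minimal model of the `X`-reduct of `P`. -/
def StableModel (P : Program α) (X : Set α) : Prop :=
  redModel P X X ∧ ∀ M, M ⊆ X → redModel P X M → M = X

/-- The set of stable models of a program. -/
def SM (P : Program α) : Set (Set α) := {X | StableModel P X}

/-- A program is satisfiable if it has a stable model. -/
def Satisfiable (P : Program α) : Prop := ∃ X, StableModel P X

def Head.clSat (M : Set α) : Head α → Prop
  | .atom a => a ∈ M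
  | .choice _ => True
  | .bot => False

/-- `M` is a (classical) model of `P`, reading rules as implications. -/
def IsModel (P : Program α) (M : Set α) : Prop :=
  ∀ r ∈ P, (∀ l ∈ r.body, l.sat M) → r.head.clSat M

/-- `fixcons X Y = {⊥ ← not x | x ∈ X} ∪ {⊥ ← x | x ∈ Y \ X}`. -/
def fixcons (X Y : Set α) : Program α :=
  {r | (∃ x ∈ X, r = ⟨Head.bot, {Lit.neg x}⟩) ∨ (∃ x ∈ Y \ X, r = ⟨Head.bot, {Lit.pos x}⟩)}

/-- A set of atoms identified with the corresponding facts. -/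
def factsOf (X : Set α) : Program α := {r | ∃ x ∈ X, r = ⟨Head.atom x, ∅⟩}

/-- Quantifiers. -/
inductive Quant where
  | ex
  | fa

/-- Satisfiability of a quantified logic program, given by its prefix (a list of
quantified sets of atoms) and its program. -/
def QLPSat : List (Quant × Set α) → Program α → Prop
  | [], P => Satisfiable P
  | (Quant.ex, X) :: Q, P => ∃ Y, Y ⊆ X ∧ QLPSat Q (P ∪ fixcons Y X)
  | (Quant.fa, X) :: Q, P => ∀ Y, Y ⊆ X → QLPSat Q (P ∪ fixcons Y X)

/-- `r` has head atom `p` (either `p` or `{p}`). -/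
def headAtomIs (r : Rule α) (p : α) : Prop :=
  r.head = Head.atom p ∨ r.head = Head.choice p

def posEdge (P : Program α) (p q : α) : Prop :=
  ∃ r ∈ P, headAtomIs r q ∧ Lit.pos p ∈ r.body

def negEdge (P : Program α) (p q : α) : Prop :=
  ∃ r ∈ P, headAtomIs r q ∧ Lit.neg p ∈ r.body

def depEdge (P : Program α) (p q : α) : Prop := posEdge P p q ∨ negEdge P p q

/-- The dependency graph of `P` has no cycle involving a negative edge. -/
def Stratified (P : Program α) : Prop :=
  ¬ ∃ p q, negEdge P p q ∧ Relation.ReflTransGen (depEdge P) q p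

/-- `P` is in GDT form: it is stratified and all its choice rules have the form
`{p} ←` with `p` occurring in the head of no other rule. -/
def GDT (P : Program α) : Prop :=
  Stratified P ∧ ∀ r ∈ P, ∀ p, r.head = Head.choice p →
    r.body = ∅ ∧ ∀ r' ∈ P, r' ≠ r → ¬ headAtomIs r' p

/-- A clause: a set of literals. -/
abbrev Clause (α : Type u) := Set (Lit α)

/-- A CNF formula: a set of clauses. -/
abbrev CNF (α : Type u) := Set (Clause α)

def clauseSat (M : Set α) (c : Clause α) : Prop := ∃ l ∈ c, l.sat M

def CnfModel (φ : CNF α) (M : Set α) : Prop := ∀ c ∈ φ, clauseSat M c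

def CnfSat (φ : CNF α) : Prop := ∃ M, CnfModel φ M

def clauseAtoms (c : Clause α) : Set α := Lit.atomOf '' c

def cnfAtoms (φ : CNF α) : Set α := ⋃ c ∈ φ, clauseAtoms c

/-- `fixbf X Y = {{p} | p ∈ X} ∪ {{¬p} | p ∈ Y \ X}`. -/
def fixbf (X Y : Set α) : CNF α :=
  {c | (∃ p ∈ X, c = {Lit.pos p}) ∨ (∃ p ∈ Y \ X, c = {Lit.neg p})}

/-- Satisfiability of a QBF in prenex CNF, given by prefix and matrix. -/
def QBFSat : List (Quant × Set α) → CNF α → Prop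
  | [], φ => CnfSat φ
  | (Quant.ex, X) :: Q, φ => ∃ Y, Y ⊆ X ∧ QBFSat Q (φ ∪ fixbf Y X)
  | (Quant.fa, X) :: Q, φ => ∀ Y, Y ⊆ X → QBFSat Q (φ ∪ fixbf Y X)

def mapLit (g : α → β) : Lit α → Lit β
  | .pos a => .pos (g a)
  | .neg a => .neg (g a)

def mapHead (g : α → β) : Head α → Head β
  | .atom a => .atom (g a)
  | .choice a => .choice (g a)
  | .bot => .bot

def mapRule (g : α → β) (r : Rule α) : Rule β :=
  ⟨mapHead g r.head, mapLit g '' r.body⟩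

/-- Rename the atoms of a program along `g`. -/
def mapProg (g : α → β) (P : Program α) : Program β := mapRule g '' P

/-- Add the literals in `L` to the body of every rule of `P`. -/
def addBody (L : Set (Lit α)) (P : Program α) : Program α :=
  {r | ∃ r' ∈ P, r = ⟨r'.head, r'.body ∪ L⟩}

def replBotHead (p : α) : Rule α → Rule α
  | ⟨Head.bot, B⟩ => ⟨Head.atom p, B⟩
  | r => r

/-- Replace `⊥` in the head of every integrity constraint of `P` by the atom `p`. -/
def botTo (p : α) (P : Program α) : Program α := replBotHead p '' P

def choiceRules (P : Program α) : Program α := {r ∈ P | ∃ p, r.head = Head.choice p}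

def normalRules (P : Program α) : Program α := {r ∈ P | ∃ p, r.head = Head.atom p}

def constraintRules (P : Program α) : Program α := {r ∈ P | r.head = Head.bot}

end ASP
namespace ASP

variable {α : Type u}

/-- `fixfact X Y = {x ← | x ∈ X} ∪ {⊥ ← x | x ∈ Y \ X}`. -/
def fixfact (X Y : Set α) : Program α :=
  factsOf X ∪ {r | ∃ x ∈ Y \ X, r = ⟨Head.bot, {Lit.pos x}⟩}

/-- Coherence of an ASP(Q) program `□₀P₀ ⋯ □ₙPₙ : C`, given by the list of its
quantified programs and the constraint program `C`. -/
def Coherent : List (Quant × Program α) → Program α → Prop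
  | [], C => Satisfiable C
  | [(Quant.ex, P)], C => ∃ M, StableModel P M ∧ Satisfiable (C ∪ fixfact M (progAtoms P))
  | [(Quant.fa, P)], C => ∀ M, StableModel P M → Satisfiable (C ∪ fixfact M (progAtoms P))
  | (Quant.ex, P) :: Q :: rest, C =>
      ∃ M, StableModel P M ∧ Coherent ((Q.1, Q.2 ∪ fixfact M (progAtoms P)) :: rest) C
  | (Quant.fa, P) :: Q :: rest, C =>
      ∀ M, StableModel P M → Coherent ((Q.1, Q.2 ∪ fixfact M (progAtoms P)) :: rest) C
termination_by l _ => l.length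

/-- Normal form: head atoms of `Pⱼ` do not occur in any previous `Pᵢ`
(the constraint program is required to be empty separately). -/
def NormalForm (L : List (Quant × Program α)) : Prop :=
  ∀ i j (hij : i < j) (hj : j < L.length), ∀ r ∈ (L.get ⟨j, hj⟩).2, ∀ p,
    headAtomIs r p → p ∉ progAtoms (L.get ⟨i, hij.trans hj⟩).2

/-- The atoms occurring in the programs before position `i`. -/
def prevAtoms (L : List (Quant × Program α)) (i : ℕ) : Set α :=
  {a | ∃ q ∈ L.take i, a ∈ progAtoms q.2}

/-- The set `Xᵢ` of the prefix of `qlp(Π)`. -/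
def qlpX (L : List (Quant × Program α)) (i : ℕ) (q : Quant) (P : Program α) : Set (α ⊕ ℕ) :=
  match q with
  | Quant.ex => Sum.inl '' (progAtoms P \ prevAtoms L i)
  | Quant.fa => Sum.inl '' {p | (⟨Head.choice p, ∅⟩ : Rule α) ∈ P}

/-- The program `Pᵢ•` of `qlp(Π)`; `Sum.inr i` plays the role of the fresh atom `αᵢ`. -/
def qlpP (L : List (Quant × Program α)) (i : ℕ) (q : Quant) (P : Program α) :
    Program (α ⊕ ℕ) :=
  match q with
  | Quant.ex =>
      if L.length = 1 then mapProg Sum.inl P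
      else addBody {Lit.neg (Sum.inr i)} (mapProg Sum.inl P)
  | Quant.fa => botTo (Sum.inr i) (mapProg Sum.inl P)

/-- `β = 1` if `□₀ = ∀ˢᵗ` and `β = 2` otherwise. -/
def qlpBeta (L : List (Quant × Program α)) : ℕ :=
  match L with
  | (Quant.fa, _) :: _ => 1
  | _ => 2

/-- `O = {αᵢ ← αᵢ₋₁ | β ≤ i ≤ n}`. -/
def qlpO (L : List (Quant × Program α)) : Program (α ⊕ ℕ) :=
  {r | ∃ i, qlpBeta L ≤ i ∧ i ≤ L.length - 1 ∧
       r = ⟨Head.atom (Sum.inr i), {Lit.pos (Sum.inr (i - 1))}⟩}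

/-- The prefix of `qlp(Π)`. -/
def qlpPrefix (L : List (Quant × Program α)) : List (Quant × Set (α ⊕ ℕ)) :=
  (L.zipIdx.map Prod.swap).map fun ix => (ix.2.1, qlpX L ix.1 ix.2.1 ix.2.2)

/-- The program of `qlp(Π)`: `P₀• ∪ … ∪ Pₙ• ∪ O`. -/
def qlpProg (L : List (Quant × Program α)) : Program (α ⊕ ℕ) :=
  {r | ∃ ix ∈ L.zipIdx.map Prod.swap, r ∈ qlpP L ix.1 ix.2.1 ix.2.2} ∪ qlpO L

/-- The constraints `O` of `aspq(𝒬P)`, linking original and primed atoms;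
`Sum.inr p` plays the role of the fresh primed atom `p'`. -/
def aspqO (Qs : List (Quant × Set α)) : Program (α ⊕ α) :=
  {r | ∃ p, (∃ X ∈ Qs.map Prod.snd, p ∈ X) ∧
    (r = ⟨Head.bot, {Lit.pos (Sum.inl p), Lit.neg (Sum.inr p)}⟩ ∨
     r = ⟨Head.bot, {Lit.neg (Sum.inl p), Lit.pos (Sum.inr p)}⟩)}

/-- `aspq(𝒬P) = Q₀ˢᵗP₀ … QₙˢᵗPₙ ∃ˢᵗ(P ∪ O)` with `Pᵢ = {{p'} ← | p ∈ Xᵢ}`. -/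
def aspqList (Qs : List (Quant × Set α)) (P : Program α) : List (Quant × Program (α ⊕ α)) :=
  (Qs.map fun qX =>
    (qX.1, ({r | ∃ p ∈ qX.2, r = ⟨Head.choice (Sum.inr p), ∅⟩} : Program (α ⊕ α))))
  ++ [(Quant.ex, mapProg Sum.inl P ∪ aspqO Qs)]

end ASP
namespace ASP
variable {α : Type u}

@[simp] lemma Head.redSat_atom {X M : Set α} {a} :
    (Head.atom a).redSat X M ↔ a ∈ X ∧ a ∈ M := Iff.rfl
@[simp] lemma Head.redSat_choice {X M : Set α} {a} :
    (Head.choice a).redSat X M ↔ (a ∈ X ∧ a ∈ M) ∨ (a ∉ X ∧ a ∉ M) := Iff.rfl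
@[simp] lemma Head.redSat_bot {X M : Set α} :
    (Head.bot : Head α).redSat X M ↔ False := Iff.rfl
@[simp] lemma Lit.redSat_pos {X M : Set α} {a} :
    (Lit.pos a).redSat X M ↔ a ∈ X ∧ a ∈ M := Iff.rfl
@[simp] lemma Lit.redSat_neg {X M : Set α} {a} :
    (Lit.neg a).redSat X M ↔ a ∉ X ∧ a ∉ M := Iff.rfl

lemma redSat_mono {M N : Set α} (hNM : N ⊆ M) {l : Lit α} (h : l.redSat M N) :
    l.redSat M M := ⟨h.1, h.1⟩

/-- Auxiliary: the choice program `{{p'} ← | p ∈ X}`. -/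
def choiceProg (X : Set α) : Program (α ⊕ α) :=
  {r | ∃ p ∈ X, r = ⟨Head.choice (Sum.inr p), ∅⟩}

def OV (V : Set α) : Program (α ⊕ α) :=
  {r | ∃ p ∈ V,
    r = ⟨Head.bot, {Lit.pos (Sum.inl p), Lit.neg (Sum.inr p)}⟩ ∨
    r = ⟨Head.bot, {Lit.neg (Sum.inl p), Lit.pos (Sum.inr p)}⟩}

def tailP (V : Set α) (P : Program α) : Program (α ⊕ α) := mapProg Sum.inl P ∪ OV V

def plainL (Qs : List (Quant × Set α)) (V : Set α) (P : Program α) :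
    List (Quant × Program (α ⊕ α)) :=
  (Qs.map fun qX => (qX.1, choiceProg qX.2)) ++ [(Quant.ex, tailP V P)]

lemma aspqO_eq (Qs : List (Quant × Set α)) :
    aspqO Qs = OV (⋃ s ∈ Qs, s.2) := by
  ext r
  simp only [aspqO, OV, Set.mem_setOf_eq, List.mem_map, Set.mem_iUnion, exists_prop]
  constructor
  · rintro ⟨p, ⟨X, ⟨s, hs, rfl⟩, hp⟩, h⟩
    exact ⟨p, ⟨s, hs, hp⟩, h⟩
  · rintro ⟨p, ⟨s, hs, hp⟩, h⟩
    exact ⟨p, ⟨s.2, ⟨s, hs, rfl⟩, hp⟩, h⟩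

lemma aspqList_eq (Qs : List (Quant × Set α)) (P : Program α) :
    aspqList Qs P = plainL Qs (⋃ s ∈ Qs, s.2) P := by
  unfold aspqList plainL tailP choiceProg
  rw [aspqO_eq]

lemma mem_CF {X Y W : Set α} {r : Rule (α ⊕ α)} :
    r ∈ choiceProg X ∪ fixfact (Sum.inr '' Y) (Sum.inr '' W) ↔
      (∃ p ∈ X, r = ⟨Head.choice (Sum.inr p), ∅⟩) ∨
      (∃ p ∈ Y, r = ⟨Head.atom (Sum.inr p), ∅⟩) ∨
      (∃ p, (p ∈ W ∧ p ∉ Y) ∧ r = ⟨Head.bot, {Lit.pos (Sum.inr p)}⟩) := by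
  simp only [Set.mem_union, choiceProg, fixfact, factsOf, Set.mem_setOf_eq, Set.mem_image,
    Set.mem_diff]
  constructor
  · rintro ((⟨p, hp, rfl⟩) | (⟨x, ⟨p, hp, rfl⟩, rfl⟩ | ⟨x, ⟨⟨p, hp, rfl⟩, hnY⟩, rfl⟩))
    · exact Or.inl ⟨p, hp, rfl⟩
    · exact Or.inr (Or.inl ⟨p, hp, rfl⟩)
    · exact Or.inr (Or.inr ⟨p, ⟨hp, fun h => hnY ⟨p, h, rfl⟩⟩, rfl⟩)
  · rintro (⟨p, hp, rfl⟩ | ⟨p, hp, rfl⟩ | ⟨p, ⟨hpW, hpY⟩, rfl⟩)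
    · exact Or.inl ⟨p, hp, rfl⟩
    · exact Or.inr (Or.inl ⟨Sum.inr p, ⟨p, hp, rfl⟩, rfl⟩)
    · refine Or.inr (Or.inr ⟨Sum.inr p, ⟨⟨p, hpW, rfl⟩, ?_⟩, rfl⟩)
      rintro ⟨p', hp', h⟩
      cases Sum.inr_injective h
      exact hpY hp'

lemma progAtoms_CF {X Y W : Set α} (hYW : Y ⊆ W) :
    progAtoms (choiceProg X ∪ fixfact (Sum.inr '' Y) (Sum.inr '' W)) =
      Sum.inr '' (X ∪ W) := by
  ext a
  simp only [progAtoms, Set.mem_iUnion, exists_prop]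
  constructor
  · rintro ⟨r, hr, ha⟩
    rcases mem_CF.1 hr with ⟨p, hp, rfl⟩ | ⟨p, hp, rfl⟩ | ⟨p, ⟨hpW, -⟩, rfl⟩
    · simp only [ruleAtoms, Head.atoms, Set.image_empty, Set.union_empty,
        Set.mem_singleton_iff] at ha
      exact ⟨p, Or.inl hp, ha.symm⟩
    · simp only [ruleAtoms, Head.atoms, Set.image_empty, Set.union_empty,
        Set.mem_singleton_iff] at ha
      exact ⟨p, Or.inr (hYW hp), ha.symm⟩
    · simp only [ruleAtoms, Head.atoms, Set.image_singleton, Lit.atomOf, Set.empty_union,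
        Set.mem_singleton_iff] at ha
      exact ⟨p, Or.inr hpW, ha.symm⟩
  · rintro ⟨p, hp | hp, rfl⟩
    · refine ⟨⟨Head.choice (Sum.inr p), ∅⟩, mem_CF.2 (Or.inl ⟨p, hp, rfl⟩), ?_⟩
      simp [ruleAtoms, Head.atoms]
    · by_cases hpY : p ∈ Y
      · refine ⟨⟨Head.atom (Sum.inr p), ∅⟩, mem_CF.2 (Or.inr (Or.inl ⟨p, hpY, rfl⟩)), ?_⟩
        simp [ruleAtoms, Head.atoms]
      · refine ⟨⟨Head.bot, {Lit.pos (Sum.inr p)}⟩,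
          mem_CF.2 (Or.inr (Or.inr ⟨p, ⟨hp, hpY⟩, rfl⟩)), ?_⟩
        simp [ruleAtoms, Head.atoms, Lit.atomOf]

end ASP
namespace ASP
variable {α : Type u}

lemma stable_fixfact (M A : Set α) : StableModel (fixfact M A) M := by
  constructor
  · rintro r hr hb
    rcases hr with ⟨x, hx, rfl⟩ | hr
    · exact ⟨hx, hx⟩
    · simp only [Set.mem_setOf_eq] at hr
      rcases hr with ⟨x, hx, rfl⟩
      exact absurd (hb (Lit.pos x) rfl).2 hx.2
  · intro N hN hmod
    refine Set.Subset.antisymm hN fun x hx => ?_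
    exact (hmod ⟨Head.atom x, ∅⟩ (Or.inl ⟨x, hx, rfl⟩)
      (fun l hl => absurd hl (Set.notMem_empty l))).2

lemma coherent_single_ex (G : Program α) :
    Coherent [(Quant.ex, G)] (∅ : Program α) ↔ Satisfiable G := by
  rw [Coherent]
  constructor
  · rintro ⟨M, hM, -⟩; exact ⟨M, hM⟩
  · rintro ⟨M, hM⟩
    refine ⟨M, hM, ?_⟩
    rw [Set.empty_union]
    exact ⟨_, stable_fixfact _ _⟩

lemma stable_choice_iff {X Y W : Set α} (hYW : Y ⊆ W) (hWX : Disjoint W X)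
    {M : Set (α ⊕ α)} :
    StableModel (choiceProg X ∪ fixfact (Sum.inr '' Y) (Sum.inr '' W)) M ↔
      ∃ Z, Z ⊆ X ∧ M = Sum.inr '' (Y ∪ Z) := by
  have hemp : ∀ l : Lit (α ⊕ α), l ∈ (∅ : Set (Lit (α ⊕ α))) → l.redSat M M :=
    fun l hl => absurd hl (Set.notMem_empty l)
  constructor
  · intro hM
    have hY : ∀ p ∈ Y, Sum.inr p ∈ M := fun p hp =>
      (hM.1 _ (mem_CF.2 (Or.inr (Or.inl ⟨p, hp, rfl⟩))) hemp).2
    refine ⟨{p | p ∈ X ∧ Sum.inr p ∈ M}, fun p hp => hp.1, ?_⟩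
    have hsub : Sum.inr '' (Y ∪ {p | p ∈ X ∧ Sum.inr p ∈ M}) ⊆ M := by
      rintro a ⟨p, hp | hp, rfl⟩
      · exact hY p hp
      · exact hp.2
    refine (hM.2 _ hsub ?_).symm
    intro r hr hb
    rcases mem_CF.1 hr with ⟨p, hp, rfl⟩ | ⟨p, hp, rfl⟩ | ⟨p, ⟨hpW, hpY⟩, rfl⟩
    · by_cases hm : Sum.inr p ∈ M
      · exact Or.inl ⟨hm, ⟨p, Or.inr ⟨hp, hm⟩, rfl⟩⟩
      · refine Or.inr ⟨hm, ?_⟩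
        rintro ⟨p', hp', h⟩
        cases Sum.inr_injective h
        rcases hp' with h' | h'
        · exact hm (hY _ h')
        · exact hm h'.2
    · exact ⟨hY p hp, ⟨p, Or.inl hp, rfl⟩⟩
    · -- constraint rule; its body is not redSat by M itself
      have := hM.1 _ hr (fun l hl => redSat_mono hsub (hb l hl))
      simp only [Head.redSat_bot] at this
  · rintro ⟨Z, hZX, rfl⟩
    constructor
    · intro r hr hb
      rcases mem_CF.1 hr with ⟨p, hp, rfl⟩ | ⟨p, hp, rfl⟩ | ⟨p, ⟨hpW, hpY⟩, rfl⟩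
      · tauto
      · have : Sum.inr p ∈ (Sum.inr '' (Y ∪ Z) : Set (α ⊕ α)) := ⟨p, Or.inl hp, rfl⟩
        exact ⟨this, this⟩
      · have := (hb (Lit.pos (Sum.inr p)) rfl).2
        rcases this with ⟨p', hp', h⟩
        cases Sum.inr_injective h
        rcases hp' with h' | h'
        · exact hpY h'
        · exact hWX.le_bot ⟨hpW, hZX h'⟩
    · intro N hNM hmod
      refine Set.Subset.antisymm hNM ?_
      rintro a ⟨p, hp, rfl⟩
      rcases hp with hp | hp
      · exact (hmod _ (mem_CF.2 (Or.inr (Or.inl ⟨p, hp, rfl⟩)))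
          (fun l hl => absurd hl (Set.notMem_empty l))).2
      · have := hmod _ (mem_CF.2 (Or.inl ⟨p, hZX hp, rfl⟩))
          (fun l hl => absurd hl (Set.notMem_empty l))
        rcases this with h | h
        · exact h.2
        · exact absurd ⟨p, Or.inr hp, rfl⟩ h.1

lemma fixcons_union {Y W Z X : Set α} (hYW : Y ⊆ W) (hZX : Z ⊆ X) (hWX : Disjoint W X) :
    fixcons Y W ∪ fixcons Z X = fixcons (Y ∪ Z) (W ∪ X) := by
  ext r
  simp only [fixcons, Set.mem_union, Set.mem_setOf_eq, Set.mem_diff]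
  constructor
  · rintro ((⟨x, hx, rfl⟩ | ⟨x, ⟨hxW, hxY⟩, rfl⟩) | (⟨x, hx, rfl⟩ | ⟨x, ⟨hxX, hxZ⟩, rfl⟩))
    · exact Or.inl ⟨x, Or.inl hx, rfl⟩
    · refine Or.inr ⟨x, ⟨Or.inl hxW, ?_⟩, rfl⟩
      rintro (h | h)
      · exact hxY h
      · exact hWX.le_bot ⟨hxW, hZX h⟩
    · exact Or.inl ⟨x, Or.inr hx, rfl⟩
    · refine Or.inr ⟨x, ⟨Or.inr hxX, ?_⟩, rfl⟩
      rintro (h | h)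
      · exact hWX.le_bot ⟨hYW h, hxX⟩
      · exact hxZ h
  · rintro (⟨x, hx | hx, rfl⟩ | ⟨x, ⟨hxWX, hxYZ⟩, rfl⟩)
    · exact Or.inl (Or.inl ⟨x, hx, rfl⟩)
    · exact Or.inr (Or.inl ⟨x, hx, rfl⟩)
    · rcases hxWX with h | h
      · exact Or.inl (Or.inr ⟨x, ⟨h, fun h' => hxYZ (Or.inl h')⟩, rfl⟩)
      · exact Or.inr (Or.inr ⟨x, ⟨h, fun h' => hxYZ (Or.inr h')⟩, rfl⟩)

lemma biUnion_cons (a : Quant × Set α) (l : List (Quant × Set α)) :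
    (⋃ s ∈ a :: l, s.2) = a.2 ∪ ⋃ s ∈ l, s.2 := by
  ext x
  simp only [Set.mem_iUnion, Set.mem_union, List.mem_cons, exists_prop]
  constructor
  · rintro ⟨s, rfl | hs, hx⟩
    · exact Or.inl hx
    · exact Or.inr ⟨s, hs, hx⟩
  · rintro (hx | ⟨s, hs, hx⟩)
    · exact ⟨a, Or.inl rfl, hx⟩
    · exact ⟨s, Or.inr hs, hx⟩

end ASP
namespace ASP
variable {α : Type u}

lemma mem_inl_iff {S T : Set α} {a : α} :
    Sum.inl a ∈ (Sum.inl '' S ∪ Sum.inr '' T : Set (α ⊕ α)) ↔ a ∈ S := by simp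
lemma mem_inr_iff {S T : Set α} {a : α} :
    Sum.inr a ∈ (Sum.inl '' S ∪ Sum.inr '' T : Set (α ⊕ α)) ↔ a ∈ T := by simp

lemma mapLit_redSat {M N : Set (α ⊕ α)} {S S' : Set α}
    (hM : ∀ a : α, Sum.inl a ∈ M ↔ a ∈ S) (hN : ∀ a : α, Sum.inl a ∈ N ↔ a ∈ S') :
    ∀ l : Lit α, (mapLit Sum.inl l).redSat M N ↔ l.redSat S S'
  | .pos a => by simp [mapLit, hM, hN]
  | .neg a => by simp [mapLit, hM, hN]

lemma mapHead_redSat {M N : Set (α ⊕ α)} {S S' : Set α}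
    (hM : ∀ a : α, Sum.inl a ∈ M ↔ a ∈ S) (hN : ∀ a : α, Sum.inl a ∈ N ↔ a ∈ S') :
    ∀ h : Head α, (mapHead Sum.inl h).redSat M N ↔ h.redSat S S'
  | .atom a => by simp [mapHead, hM, hN]
  | .choice a => by simp [mapHead, hM, hN]
  | .bot => Iff.rfl

lemma mapRule_redModel {M N : Set (α ⊕ α)} {S S' : Set α}
    (hM : ∀ a : α, Sum.inl a ∈ M ↔ a ∈ S) (hN : ∀ a : α, Sum.inl a ∈ N ↔ a ∈ S')
    (r : Rule α) :
    ((∀ l ∈ (mapRule Sum.inl r).body, l.redSat M N) → (mapRule Sum.inl r).head.redSat M N) ↔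
      ((∀ l ∈ r.body, l.redSat S S') → r.head.redSat S S') := by
  have hb : (∀ l ∈ (mapRule Sum.inl r).body, l.redSat M N) ↔
      (∀ l ∈ r.body, l.redSat S S') := by
    constructor
    · intro h l hl
      exact (mapLit_redSat hM hN l).1 (h _ ⟨l, hl, rfl⟩)
    · rintro h l ⟨l₀, hl₀, rfl⟩
      exact (mapLit_redSat hM hN l₀).2 (h _ hl₀)
  rw [hb]
  exact imp_congr Iff.rfl (mapHead_redSat hM hN r.head)

lemma mem_GG {V Y W : Set α} {P : Program α} {r : Rule (α ⊕ α)} :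
    r ∈ tailP V P ∪ fixfact (Sum.inr '' Y) (Sum.inr '' W) ↔
      (∃ r₀ ∈ P, r = mapRule Sum.inl r₀) ∨
      (∃ p ∈ V, r = ⟨Head.bot, {Lit.pos (Sum.inl p), Lit.neg (Sum.inr p)}⟩ ∨
                r = ⟨Head.bot, {Lit.neg (Sum.inl p), Lit.pos (Sum.inr p)}⟩) ∨
      (∃ p ∈ Y, r = ⟨Head.atom (Sum.inr p), ∅⟩) ∨
      (∃ p, (p ∈ W ∧ p ∉ Y) ∧ r = ⟨Head.bot, {Lit.pos (Sum.inr p)}⟩) := by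
  simp only [tailP, Set.mem_union, mapProg, Set.mem_image, OV, fixfact, factsOf,
    Set.mem_setOf_eq, Set.mem_diff]
  constructor
  · rintro ((⟨r₀, hr₀, rfl⟩ | h) | (⟨x, ⟨p, hp, rfl⟩, rfl⟩ | ⟨x, ⟨⟨p, hp, rfl⟩, hnY⟩, rfl⟩))
    · exact Or.inl ⟨r₀, hr₀, rfl⟩
    · exact Or.inr (Or.inl h)
    · exact Or.inr (Or.inr (Or.inl ⟨p, hp, rfl⟩))
    · exact Or.inr (Or.inr (Or.inr ⟨p, ⟨hp, fun h => hnY ⟨p, h, rfl⟩⟩, rfl⟩))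
  · rintro (⟨r₀, hr₀, rfl⟩ | h | ⟨p, hp, rfl⟩ | ⟨p, ⟨hpW, hpY⟩, rfl⟩)
    · exact Or.inl (Or.inl ⟨r₀, hr₀, rfl⟩)
    · exact Or.inl (Or.inr h)
    · exact Or.inr (Or.inl ⟨Sum.inr p, ⟨p, hp, rfl⟩, rfl⟩)
    · refine Or.inr (Or.inr ⟨Sum.inr p, ⟨⟨p, hpW, rfl⟩, ?_⟩, rfl⟩)
      rintro ⟨p', hp', h⟩
      cases Sum.inr_injective h
      exact hpY hp'

lemma tail_stable_mp {P : Program α} {Y W : Set α} (hYW : Y ⊆ W) {M : Set (α ⊕ α)}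
    (hM : StableModel (tailP W P ∪ fixfact (Sum.inr '' Y) (Sum.inr '' W)) M) :
    Satisfiable (P ∪ fixcons Y W) := by
  set S : Set α := {a | Sum.inl a ∈ M} with hS
  have hY : ∀ p ∈ Y, Sum.inr p ∈ M := fun p hp =>
    (hM.1 _ (mem_GG.2 (Or.inr (Or.inr (Or.inl ⟨p, hp, rfl⟩))))
      (fun l hl => absurd hl (Set.notMem_empty l))).2
  have hWnY : ∀ p ∈ W, p ∉ Y → Sum.inr p ∉ M := by
    intro p hpW hpY hm
    exact hM.1 _ (mem_GG.2 (Or.inr (Or.inr (Or.inr ⟨p, ⟨hpW, hpY⟩, rfl⟩))))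
      (by rintro l hl; rw [Set.mem_singleton_iff] at hl; subst hl; exact ⟨hm, hm⟩)
  have hO1 : ∀ p ∈ W, Sum.inl p ∈ M → Sum.inr p ∈ M := by
    intro p hp h1
    by_contra h2
    exact hM.1 _ (mem_GG.2 (Or.inr (Or.inl ⟨p, hp, Or.inl rfl⟩)))
      (by
        rintro l hl
        rcases hl with rfl | hl
        · exact ⟨h1, h1⟩
        · rw [Set.mem_singleton_iff] at hl; subst hl; exact ⟨h2, h2⟩)
  have hO2 : ∀ p ∈ W, Sum.inr p ∈ M → Sum.inl p ∈ M := by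
    intro p hp h1
    by_contra h2
    exact hM.1 _ (mem_GG.2 (Or.inr (Or.inl ⟨p, hp, Or.inr rfl⟩)))
      (by
        rintro l hl
        rcases hl with rfl | hl
        · exact ⟨h2, h2⟩
        · rw [Set.mem_singleton_iff] at hl; subst hl; exact ⟨h1, h1⟩)
  have hMl : ∀ a : α, Sum.inl a ∈ M ↔ a ∈ S := fun a => Iff.rfl
  have hsub : (Sum.inl '' S ∪ Sum.inr '' Y : Set (α ⊕ α)) ⊆ M := by
    rintro x (⟨a, ha, rfl⟩ | ⟨p, hp, rfl⟩)
    · exact ha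
    · exact hY p hp
  have hred : redModel (tailP W P ∪ fixfact (Sum.inr '' Y) (Sum.inr '' W)) M
      (Sum.inl '' S ∪ Sum.inr '' Y) := by
    intro r hr hb
    have hMM := hM.1 _ hr (fun l hl => redSat_mono hsub (hb l hl))
    rcases mem_GG.1 hr with ⟨r₀, hr₀, rfl⟩ | ⟨p, hp, rfl | rfl⟩ | ⟨p, hp, rfl⟩
      | ⟨p, ⟨hpW, hpY⟩, rfl⟩
    · obtain ⟨hd, bd⟩ := r₀
      cases hd with
      | atom a => exact ⟨hMM.1, Or.inl ⟨a, hMM.1, rfl⟩⟩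
      | choice a =>
        rcases hMM with h | h
        · exact Or.inl ⟨h.1, Or.inl ⟨a, h.1, rfl⟩⟩
        · exact Or.inr ⟨h.1, fun hn => h.1 (hsub hn)⟩
      | bot => exact hMM
    · exact hMM
    · exact hMM
    · exact ⟨hY p hp, Or.inr ⟨p, hp, rfl⟩⟩
    · exact hMM
  have hMeq : (Sum.inl '' S ∪ Sum.inr '' Y : Set (α ⊕ α)) = M := hM.2 _ hsub hred
  have hMr : ∀ p : α, Sum.inr p ∈ M ↔ p ∈ Y := by
    intro p; rw [← hMeq]; exact mem_inr_iff
  have hZW : ∀ p ∈ W, (p ∈ S ↔ p ∈ Y) := fun p hp =>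
    ⟨fun hs => (hMr p).1 (hO1 p hp hs), fun hy => hO2 p hp ((hMr p).2 hy)⟩
  refine ⟨S, ?_, ?_⟩
  · intro r hr hb
    rcases hr with hr | hr
    · exact (mapRule_redModel hMl hMl r).1
        (fun hb' => hM.1 _ (mem_GG.2 (Or.inl ⟨r, hr, rfl⟩)) hb') hb
    · rcases hr with ⟨x, hx, rfl⟩ | ⟨x, ⟨hxW, hxY⟩, rfl⟩
      · exact (hb (Lit.neg x) rfl).1 ((hZW x (hYW hx)).2 hx)
      · exact hxY ((hZW x hxW).1 (hb (Lit.pos x) rfl).1)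
  · intro N hNS hmod
    set N' : Set (α ⊕ α) := Sum.inl '' N ∪ Sum.inr '' Y with hN'
    have hN'M : N' ⊆ M := by
      rintro x (⟨a, ha, rfl⟩ | ⟨p, hp, rfl⟩)
      · exact hNS ha
      · exact hY p hp
    have hN'l : ∀ a : α, Sum.inl a ∈ N' ↔ a ∈ N := fun a => mem_inl_iff
    have hredN : redModel (tailP W P ∪ fixfact (Sum.inr '' Y) (Sum.inr '' W)) M N' := by
      intro r hr hb
      rcases mem_GG.1 hr with ⟨r₀, hr₀, rfl⟩ | ⟨p, hp, rfl | rfl⟩ | ⟨p, hp, rfl⟩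
        | ⟨p, ⟨hpW, hpY⟩, rfl⟩
      · exact (mapRule_redModel hMl hN'l r₀).2 (hmod r₀ (Or.inl hr₀)) hb
      · have h1 := hb _ (Set.mem_insert _ _)
        have h2 := hb _ (Set.mem_insert_of_mem _ rfl)
        exact h2.1 (hO1 p hp h1.1)
      · have h1 := hb _ (Set.mem_insert _ _)
        have h2 := hb _ (Set.mem_insert_of_mem _ rfl)
        exact h1.1 (hO2 p hp h2.1)
      · exact ⟨hY p hp, Or.inr ⟨p, hp, rfl⟩⟩
      · exact hpY ((hMr p).1 (hb _ rfl).1)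
    have hN'eq := hM.2 N' hN'M hredN
    refine Set.Subset.antisymm hNS fun a ha => (hN'l a).1 ?_
    rw [hN'eq]
    exact ha

lemma tail_stable_mpr {P : Program α} {Y W : Set α} (hYW : Y ⊆ W) {Z : Set α}
    (hZ : StableModel (P ∪ fixcons Y W) Z) :
    StableModel (tailP W P ∪ fixfact (Sum.inr '' Y) (Sum.inr '' W))
      (Sum.inl '' Z ∪ Sum.inr '' Y) := by
  have hYZ : Y ⊆ Z := by
    intro x hx
    by_contra hxZ
    exact hZ.1 _ (Or.inr (Or.inl ⟨x, hx, rfl⟩))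
      (by rintro l hl; rw [Set.mem_singleton_iff] at hl; subst hl; exact ⟨hxZ, hxZ⟩)
  have hWZ : ∀ x ∈ W, x ∉ Y → x ∉ Z := by
    intro x hxW hxY hxZ
    exact hZ.1 _ (Or.inr (Or.inr ⟨x, ⟨hxW, hxY⟩, rfl⟩))
      (by rintro l hl; rw [Set.mem_singleton_iff] at hl; subst hl; exact ⟨hxZ, hxZ⟩)
  set M : Set (α ⊕ α) := Sum.inl '' Z ∪ Sum.inr '' Y with hMdef
  have hMl : ∀ a : α, Sum.inl a ∈ M ↔ a ∈ Z := fun a => mem_inl_iff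
  have hMr : ∀ a : α, Sum.inr a ∈ M ↔ a ∈ Y := fun a => mem_inr_iff
  constructor
  · intro r hr hb
    rcases mem_GG.1 hr with ⟨r₀, hr₀, rfl⟩ | ⟨p, hp, rfl | rfl⟩ | ⟨p, hp, rfl⟩
      | ⟨p, ⟨hpW, hpY⟩, rfl⟩
    · exact (mapRule_redModel hMl hMl r₀).2 (hZ.1 r₀ (Or.inl hr₀)) hb
    · have h1 := hb _ (Set.mem_insert _ _)
      have h2 := hb _ (Set.mem_insert_of_mem _ rfl)
      exact hWZ p hp (fun hy => h2.1 ((hMr p).2 hy)) ((hMl p).1 h1.1)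
    · have h1 := hb _ (Set.mem_insert _ _)
      have h2 := hb _ (Set.mem_insert_of_mem _ rfl)
      exact h1.1 ((hMl p).2 (hYZ ((hMr p).1 h2.1)))
    · exact ⟨(hMr p).2 hp, (hMr p).2 hp⟩
    · exact hpY ((hMr p).1 (hb _ rfl).1)
  · intro N' hN'M hmod
    set N : Set α := {a | Sum.inl a ∈ N'} with hNdef
    have hNZ : N ⊆ Z := fun a ha => (hMl a).1 (hN'M ha)
    have hN'l : ∀ a : α, Sum.inl a ∈ N' ↔ a ∈ N := fun a => Iff.rfl
    have hNred : redModel (P ∪ fixcons Y W) Z N := by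
      intro r hr hb
      rcases hr with hr | hr
      · exact (mapRule_redModel hMl hN'l r).1
          (hmod _ (mem_GG.2 (Or.inl ⟨r, hr, rfl⟩))) hb
      · rcases hr with ⟨x, hx, rfl⟩ | ⟨x, ⟨hxW, hxY⟩, rfl⟩
        · exact (hb (Lit.neg x) rfl).1 (hYZ hx)
        · exact hWZ x hxW hxY (hb (Lit.pos x) rfl).1
    have hNZ' := hZ.2 N hNZ hNred
    refine Set.Subset.antisymm hN'M ?_
    rintro x (⟨a, ha, rfl⟩ | ⟨p, hp, rfl⟩)
    · rw [← hNZ'] at ha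
      exact ha
    · exact (hmod _ (mem_GG.2 (Or.inr (Or.inr (Or.inl ⟨p, hp, rfl⟩))))
        (fun l hl => absurd hl (Set.notMem_empty l))).2

lemma tail_sat_iff {P : Program α} {Y W : Set α} (hYW : Y ⊆ W) :
    Satisfiable (tailP W P ∪ fixfact (Sum.inr '' Y) (Sum.inr '' W)) ↔
      Satisfiable (P ∪ fixcons Y W) := by
  constructor
  · rintro ⟨M, hM⟩
    exact tail_stable_mp hYW hM
  · rintro ⟨Z, hZ⟩
    exact ⟨_, tail_stable_mpr hYW hZ⟩

end ASP
namespace ASP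
variable {α : Type u}

lemma plainL_cons (a : Quant × Set α) (l : List (Quant × Set α)) (V : Set α) (P : Program α) :
    plainL (a :: l) V P = (a.1, choiceProg a.2) :: plainL l V P := rfl

lemma gen (P : Program α) (V : Set α) (rest : List (Quant × Set α)) :
    ∀ (q : Quant) (X W Y : Set α),
    Y ⊆ W →
    (((q, X) :: rest).Pairwise fun a b => Disjoint a.2 b.2) →
    (∀ s ∈ (q, X) :: rest, Disjoint W s.2) →
    V = W ∪ ⋃ s ∈ ((q, X) :: rest), s.2 →
    (QLPSat ((q, X) :: rest) (P ∪ fixcons Y W) ↔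
      Coherent ((q, choiceProg X ∪ fixfact (Sum.inr '' Y) (Sum.inr '' W)) :: plainL rest V P)
        (∅ : Program (α ⊕ α))) := by
  induction rest with
  | nil =>
    intro q X W Y hYW hpw hdis hV
    have hWX : Disjoint W X := hdis (q, X) List.mem_cons_self
    have hVWX : V = W ∪ X := by rw [hV, biUnion_cons]; simp
    simp only [plainL, List.map_nil, List.nil_append]
    cases q with
    | ex =>
      rw [QLPSat, Coherent]
      constructor
      · rintro ⟨Z, hZX, hsat⟩
        refine ⟨Sum.inr '' (Y ∪ Z), (stable_choice_iff hYW hWX).2 ⟨Z, hZX, rfl⟩, ?_⟩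
        rw [coherent_single_ex, progAtoms_CF hYW, Set.union_comm X W, hVWX]
        refine (tail_sat_iff (Set.union_subset_union hYW hZX)).2 ?_
        rw [QLPSat] at hsat
        rwa [Set.union_assoc, fixcons_union hYW hZX hWX] at hsat
      · rintro ⟨M, hMst, hco⟩
        obtain ⟨Z, hZX, rfl⟩ := (stable_choice_iff hYW hWX).1 hMst
        refine ⟨Z, hZX, ?_⟩
        rw [coherent_single_ex, progAtoms_CF hYW, Set.union_comm X W, hVWX] at hco
        have := (tail_sat_iff (Set.union_subset_union hYW hZX)).1 hco
        rw [QLPSat, Set.union_assoc, fixcons_union hYW hZX hWX]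
        exact this
    | fa =>
      rw [QLPSat, Coherent]
      constructor
      · intro h M hMst
        obtain ⟨Z, hZX, rfl⟩ := (stable_choice_iff hYW hWX).1 hMst
        rw [coherent_single_ex, progAtoms_CF hYW, Set.union_comm X W, hVWX]
        refine (tail_sat_iff (Set.union_subset_union hYW hZX)).2 ?_
        have hsat := h Z hZX
        rw [QLPSat] at hsat
        rwa [Set.union_assoc, fixcons_union hYW hZX hWX] at hsat
      · intro h Z hZX
        have hco := h (Sum.inr '' (Y ∪ Z)) ((stable_choice_iff hYW hWX).2 ⟨Z, hZX, rfl⟩)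
        rw [coherent_single_ex, progAtoms_CF hYW, Set.union_comm X W, hVWX] at hco
        have := (tail_sat_iff (Set.union_subset_union hYW hZX)).1 hco
        rw [QLPSat, Set.union_assoc, fixcons_union hYW hZX hWX]
        exact this
  | cons hd tl ih =>
    intro q X W Y hYW hpw hdis hV
    obtain ⟨q₁, X₁⟩ := hd
    have hWX : Disjoint W X := hdis (q, X) List.mem_cons_self
    rw [List.pairwise_cons] at hpw
    obtain ⟨h1, hpw'⟩ := hpw
    have hdis' : ∀ s ∈ (q₁, X₁) :: tl, Disjoint (W ∪ X) s.2 := fun s hs =>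
      Set.disjoint_union_left.2 ⟨hdis s (List.mem_cons_of_mem _ hs), h1 s hs⟩
    have hV' : V = (W ∪ X) ∪ ⋃ s ∈ (q₁, X₁) :: tl, s.2 := by
      rw [hV, biUnion_cons, Set.union_assoc]
    rw [plainL_cons]
    cases q with
    | ex =>
      rw [QLPSat, Coherent]
      constructor
      · rintro ⟨Z, hZX, hsat⟩
        refine ⟨Sum.inr '' (Y ∪ Z), (stable_choice_iff hYW hWX).2 ⟨Z, hZX, rfl⟩, ?_⟩
        rw [progAtoms_CF hYW, Set.union_comm X W]
        refine (ih q₁ X₁ (W ∪ X) (Y ∪ Z) (Set.union_subset_union hYW hZX) hpw' hdis' hV').1 ?_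
        rwa [Set.union_assoc, fixcons_union hYW hZX hWX] at hsat
      · rintro ⟨M, hMst, hco⟩
        obtain ⟨Z, hZX, rfl⟩ := (stable_choice_iff hYW hWX).1 hMst
        refine ⟨Z, hZX, ?_⟩
        rw [progAtoms_CF hYW, Set.union_comm X W] at hco
        rw [Set.union_assoc, fixcons_union hYW hZX hWX]
        exact (ih q₁ X₁ (W ∪ X) (Y ∪ Z) (Set.union_subset_union hYW hZX) hpw' hdis' hV').2 hco
    | fa =>
      rw [QLPSat, Coherent]
      constructor
      · intro h M hMst
        obtain ⟨Z, hZX, rfl⟩ := (stable_choice_iff hYW hWX).1 hMst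
        rw [progAtoms_CF hYW, Set.union_comm X W]
        refine (ih q₁ X₁ (W ∪ X) (Y ∪ Z) (Set.union_subset_union hYW hZX) hpw' hdis' hV').1 ?_
        have hsat := h Z hZX
        rwa [Set.union_assoc, fixcons_union hYW hZX hWX] at hsat
      · intro h Z hZX
        have hco := h (Sum.inr '' (Y ∪ Z)) ((stable_choice_iff hYW hWX).2 ⟨Z, hZX, rfl⟩)
        rw [progAtoms_CF hYW, Set.union_comm X W] at hco
        rw [Set.union_assoc, fixcons_union hYW hZX hWX]
        exact (ih q₁ X₁ (W ∪ X) (Y ∪ Z) (Set.union_subset_union hYW hZX) hpw' hdis' hV').2 hco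

end ASP

open ASP in
/-- A QLP `𝒬P` over `𝒜` is satisfiable iff the ASP(Q) program `aspq(𝒬P)` is
coherent. -/
theorem qlp_sat_iff_aspq_coherent {α : Type*} (Qs : List (Quant × Set α)) (P : Program α)
    (hQs : Qs ≠ [])
    (hdisj : Qs.Pairwise fun q q' => Disjoint q.2 q'.2) :
    QLPSat Qs P ↔ Coherent (aspqList Qs P) (∅ : Program (α ⊕ α)) := by
  obtain ⟨⟨q, X⟩, rest, rfl⟩ := List.exists_cons_of_ne_nil hQs
  have hfix : P ∪ fixcons (∅ : Set α) ∅ = P := by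
    have h : fixcons (∅ : Set α) ∅ = ∅ := by
      ext r; simp [fixcons]
    rw [h, Set.union_empty]
  have hff : choiceProg X ∪ fixfact (Sum.inr '' (∅ : Set α)) (Sum.inr '' (∅ : Set α))
      = choiceProg X := by
    have h : fixfact (Sum.inr '' (∅ : Set α)) (Sum.inr '' (∅ : Set α))
        = (∅ : Program (α ⊕ α)) := by
      ext r; simp [fixfact, factsOf]
    rw [h, Set.union_empty]
  have h := gen P (⋃ s ∈ (q, X) :: rest, s.2) rest q X ∅ ∅ (subset_refl _) hdisj
    (fun s _ => by simp) (Set.empty_union _).symm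
  rw [hfix, hff] at h
  rw [aspqList_eq, plainL_cons]
  exact h
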